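/- Counter-example separating directional and polynomial smoothness: let ν_d be the uniform distribution on the Euclidean unit ball in ℝ^d. Then (i) ν_d is σ_dir-directionally smooth with σ_dir = Ω(1/d); but (ii) for the degree-2 polynomial f(x) = ‖x‖₂²/d (which has coeff_2(f) = 1/√d up to normalization), concentration of measure gives P_{x∼ν_d}( |f(x) − 1/d·E‖x‖²·d| ≤ ε ) ≥ 1 − e^{−Ω(d)·ε}, so ν_d is σ_poly^{(2)}-polynomially smooth only with σ_poly^{(2)} exponentially small in d. -/

import Mathlib

open MeasureTheory Metric
open scoped RealInnerProductSpace
open scoped ENNReal Pointwise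

lemma aux_sq_le {a b : ℝ} (hb : 0 ≤ b) (h : a^2 ≤ b^2) (ha : 0 ≤ a) : a ≤ b := by nlinarith

lemma aux_sqrt_pow_sq {x : ℝ} (hx : 0 ≤ x) (n : ℕ) : (Real.sqrt x ^ n) ^ 2 = x ^ n := by
  rw [← pow_mul, mul_comm, pow_mul, Real.sq_sqrt hx]

lemma aux_num : (1:ℝ)/4 ≤ Real.exp (-1) * (1 - Real.exp (-2)) := by
  have h1 := Real.exp_one_gt_d9
  have h2 := Real.exp_one_lt_d9
  have e1 : Real.exp (-1) = (Real.exp 1)⁻¹ := by rw [Real.exp_neg]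
  have e2 : Real.exp (-2) = ((Real.exp 1)⁻¹ * (Real.exp 1)⁻¹) := by
    rw [← Real.exp_neg, ← Real.exp_add]; norm_num
  have hp : (0:ℝ) < Real.exp 1 := Real.exp_pos 1
  set t := Real.exp 1 with ht
  have ha : t⁻¹ * t = 1 := inv_mul_cancel₀ hp.ne'
  have hap : 0 < t⁻¹ := by positivity
  have ha1 : (0.367:ℝ) < t⁻¹ := by nlinarith
  have ha2 : t⁻¹ < (0.369:ℝ) := by nlinarith
  rw [e1, e2]
  nlinarith [mul_pos hap hap, sq_nonneg t⁻¹]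

lemma aux_conc (d : ℕ) (hd : 1 ≤ d) {δ : ℝ} (hδ : 0 < δ) :
    1 - Real.exp (-(δ/8)) ≤
      Real.sqrt (min 1 ((d:ℝ)/(d+2) + δ)) ^ d - Real.sqrt (max 0 ((d:ℝ)/(d+2) - δ)) ^ d := by
  have hd1 : (1:ℝ) ≤ d := by exact_mod_cast hd
  set u : ℝ := (d:ℝ)/(d+2) with hu
  have hu0 : 0 < u := by positivity
  have hu1 : u < 1 := by
    rw [hu, div_lt_one (by positivity)]; linarith
  -- e^{-2} ≤ u^d
  have hud : Real.exp (-2) ≤ u ^ d := by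
    have h1 : (1 + 2/(d:ℝ)) ≤ Real.exp (2/(d:ℝ)) := by
      have := Real.add_one_le_exp (2/(d:ℝ)); linarith
    have h2 : (1 + 2/(d:ℝ))^d ≤ Real.exp 2 := by
      calc (1 + 2/(d:ℝ))^d ≤ (Real.exp (2/(d:ℝ)))^d :=
            pow_le_pow_left₀ (by positivity) h1 d
        _ = Real.exp ((d:ℝ) * (2/(d:ℝ))) := by rw [Real.exp_nat_mul]
        _ = Real.exp 2 := by
            congr 1; field_simp
    have hpow : 0 < (1 + 2/(d:ℝ))^d := by positivity
    have key : u ^ d * (1 + 2/(d:ℝ))^d = 1 := by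
      rw [← mul_pow]
      have huu : u * (1 + 2/(d:ℝ)) = 1 := by
        rw [hu]; field_simp
      rw [huu, one_pow]
    have hud' : u ^ d = ((1 + 2/(d:ℝ))^d)⁻¹ := eq_inv_of_mul_eq_one_left key
    rw [Real.exp_neg, hud']
    exact inv_anti₀ hpow h2
  have hstep1 : 1 - Real.exp (-(δ/8)) ≤ δ/8 := by
    have := Real.add_one_le_exp (-(δ/8)); linarith
  rcases le_or_gt 1 (u + δ) with hcase | hcase
  · -- upper radius is 1
    rw [min_eq_left hcase, Real.sqrt_one, one_pow]
    have hY : Real.sqrt (max 0 (u - δ)) ^ d ≤ Real.exp (-(δ/8)) := by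
      rcases le_or_gt u δ with h | h
      · rw [max_eq_left (by linarith), Real.sqrt_zero, zero_pow (by omega)]
        positivity
      · rw [max_eq_right (by linarith : (0:ℝ) ≤ u - δ)]
        have hB0 : (0:ℝ) ≤ u - δ := by linarith
        have hδ1 : δ < 1 := by linarith
        apply aux_sq_le (by positivity) ?_ (by positivity)
        rw [aux_sqrt_pow_sq hB0]
        have c1 : (u - δ) ^ d ≤ (1 - δ) ^ d :=
          pow_le_pow_left₀ hB0 (by linarith) d
        have c2 : (1 - δ) ^ d ≤ (Real.exp (-δ)) ^ d :=
          pow_le_pow_left₀ (by linarith) (by have := Real.add_one_le_exp (-δ); linarith) d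
        have c3 : (Real.exp (-δ)) ^ d = Real.exp ((d:ℝ) * (-δ)) := by rw [Real.exp_nat_mul]
        have c4 : Real.exp ((d:ℝ) * (-δ)) ≤ Real.exp (-(δ/4)) := by
          apply Real.exp_le_exp.2; nlinarith
        have c5 : Real.exp (-(δ/4)) = (Real.exp (-(δ/8))) ^ 2 := by
          rw [← Real.exp_nat_mul]; congr 1; push_cast; ring
        calc (u - δ)^d ≤ (1-δ)^d := c1
          _ ≤ (Real.exp (-δ))^d := c2
          _ = Real.exp ((d:ℝ) * (-δ)) := c3
          _ ≤ Real.exp (-(δ/4)) := c4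
          _ = (Real.exp (-(δ/8)))^2 := c5
    linarith
  · -- upper radius is sqrt (u+δ)
    rw [min_eq_right hcase.le]
    set X := Real.sqrt (u + δ) with hX
    set Y := Real.sqrt (max 0 (u - δ)) with hY
    have hA0 : (0:ℝ) ≤ u + δ := by positivity
    have hXd0 : (0:ℝ) ≤ X ^ d := by positivity
    have hdδ2 : (d:ℝ) * δ < 2 := by
      have h1u : (1 - u) * ((d:ℝ)+2) = 2 := by rw [hu]; field_simp; ring
      nlinarith
    have hXe : Real.exp (-1) ≤ X ^ d := by
      apply aux_sq_le hXd0 ?_ (Real.exp_pos _).le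
      rw [aux_sqrt_pow_sq hA0]
      have e12 : Real.exp (-1) ^ 2 = Real.exp (-2) := by
        rw [← Real.exp_nat_mul]; norm_num
      rw [e12]
      calc Real.exp (-2) ≤ u ^ d := hud
        _ ≤ (u + δ)^d := pow_le_pow_left₀ hu0.le (by linarith) d
    have hYX : Y ^ d ≤ Real.exp (-((d:ℝ)*δ)) * X ^ d := by
      rcases le_or_gt u δ with h | h
      · rw [hY, max_eq_left (by linarith), Real.sqrt_zero, zero_pow (by omega)]
        positivity
      · have hB0 : (0:ℝ) ≤ u - δ := by linarith
        rw [hY, max_eq_right hB0]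
        have h2δ : 2*δ < 1 := by linarith
        have key : u - δ ≤ Real.exp (-(2*δ)) * (u + δ) := by
          have e1 : 1 - 2*δ ≤ Real.exp (-(2*δ)) := by
            have := Real.add_one_le_exp (-(2*δ)); linarith
          have e2 : u - δ ≤ (1 - 2*δ) * (u + δ) := by nlinarith
          calc u - δ ≤ (1 - 2*δ) * (u + δ) := e2
            _ ≤ Real.exp (-(2*δ)) * (u + δ) := mul_le_mul_of_nonneg_right e1 hA0
        apply aux_sq_le (by positivity) ?_ (by positivity)
        have rhs : (Real.exp (-((d:ℝ)*δ)) * X ^ d)^2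
            = Real.exp ((d:ℝ) * (-(2*δ))) * (u+δ)^d := by
          rw [mul_pow, aux_sqrt_pow_sq hA0]
          congr 1
          rw [← Real.exp_nat_mul]
          congr 1; push_cast; ring
        rw [aux_sqrt_pow_sq hB0, rhs]
        calc (u-δ)^d ≤ (Real.exp (-(2*δ)) * (u+δ))^d := pow_le_pow_left₀ hB0 key d
          _ = Real.exp ((d:ℝ) * (-(2*δ))) * (u+δ)^d := by rw [mul_pow, ← Real.exp_nat_mul]
    have h1e : Real.exp (-((d:ℝ)*δ)) ≤ 1 := by
      rw [← Real.exp_zero]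
      exact Real.exp_le_exp.2 (by nlinarith)
    have hconv : Real.exp (-((d:ℝ)*δ)) ≤ ((d:ℝ)*δ/2) * Real.exp (-2) + (1 - (d:ℝ)*δ/2) := by
      have hc := convexOn_exp.2 (Set.mem_univ (-2:ℝ)) (Set.mem_univ (0:ℝ))
        (by positivity : (0:ℝ) ≤ (d:ℝ)*δ/2) (by nlinarith : (0:ℝ) ≤ 1 - (d:ℝ)*δ/2) (by ring)
      have harg : ((d:ℝ)*δ/2) • (-2:ℝ) + (1 - (d:ℝ)*δ/2) • (0:ℝ) = -((d:ℝ)*δ) := by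
        simp [smul_eq_mul]
      rw [harg] at hc
      simpa [smul_eq_mul, Real.exp_zero] using hc
    have t1 : (d:ℝ)*δ/2 * (1 - Real.exp (-2)) ≤ 1 - Real.exp (-((d:ℝ)*δ)) := by linarith
    have t2 : Real.exp (-1) * ((d:ℝ)*δ/2 * (1 - Real.exp (-2)))
        ≤ Real.exp (-1) * (1 - Real.exp (-((d:ℝ)*δ))) :=
      mul_le_mul_of_nonneg_left t1 (Real.exp_pos _).le
    have t3 : δ/8 ≤ Real.exp (-1) * ((d:ℝ)*δ/2 * (1 - Real.exp (-2))) := by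
      have rearr : Real.exp (-1) * ((d:ℝ)*δ/2 * (1 - Real.exp (-2)))
          = ((d:ℝ)*δ/2) * (Real.exp (-1) * (1 - Real.exp (-2))) := by ring
      rw [rearr]
      calc δ/8 = (δ/2) * (1/4) := by ring
        _ ≤ ((d:ℝ)*δ/2) * (Real.exp (-1) * (1 - Real.exp (-2))) :=
            mul_le_mul (by nlinarith) aux_num (by norm_num) (by positivity)
    have final1 : Real.exp (-1) * (1 - Real.exp (-((d:ℝ)*δ)))
        ≤ X^d * (1 - Real.exp (-((d:ℝ)*δ))) :=
      mul_le_mul_of_nonneg_right hXe (by linarith)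
    have expand : X^d * (1 - Real.exp (-((d:ℝ)*δ)))
        = X^d - Real.exp (-((d:ℝ)*δ)) * X^d := by ring
    linarith

lemma aux_mean (d : ℕ) (hd : 1 ≤ d) :
    ∫ y, ‖y‖ ^ 2 / (d:ℝ)
        ∂((volume (ball (0 : EuclideanSpace ℝ (Fin d)) 1))⁻¹ •
          volume.restrict (ball (0 : EuclideanSpace ℝ (Fin d)) 1))
      = 1/((d:ℝ)+2) := by
  set E := EuclideanSpace ℝ (Fin d)
  haveI : Nontrivial E := by
    apply Module.nontrivial_of_finrank_pos (R := ℝ)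
    rw [finrank_euclideanSpace_fin]; omega
  set V : ℝ≥0∞ := volume (ball (0 : E) 1) with hV
  have hV0 : V ≠ 0 := (measure_ball_pos _ _ one_pos).ne'
  have hVtop : V ≠ ⊤ := measure_ball_lt_top.ne
  have hVR : 0 < V.toReal := ENNReal.toReal_pos hV0 hVtop
  have hι : ∫ y in ball (0:E) 1, (‖y‖:ℝ) ^ 2 ∂volume
      = (d:ℝ) * V.toReal * (1/((d:ℝ)+2)) := by
    have hind : ∫ y in ball (0:E) 1, (‖y‖:ℝ) ^ 2 ∂volume
        = ∫ y : E, Set.indicator (Set.Iio (1:ℝ)) (fun t => t^2) ‖y‖ ∂volume := by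
      rw [← integral_indicator measurableSet_ball]
      congr 1
      funext y
      by_cases h : y ∈ ball (0:E) 1
      · rw [Set.indicator_of_mem h, Set.indicator_of_mem (by
          rwa [Set.mem_Iio, ← mem_ball_zero_iff])]
      · rw [Set.indicator_of_notMem h, Set.indicator_of_notMem (by
          rwa [Set.mem_Iio, ← mem_ball_zero_iff])]
    rw [hind, integral_fun_norm_addHaar volume (fun t => Set.indicator (Set.Iio (1:ℝ)) (fun t => t^2) t)]
    rw [finrank_euclideanSpace_fin]
    have hJ : ∫ t in Set.Ioi (0:ℝ), t ^ (d-1) • Set.indicator (Set.Iio (1:ℝ)) (fun t => t^2) t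
        = 1/((d:ℝ)+2) := by
      have hptw : (fun t : ℝ => t ^ (d-1) • Set.indicator (Set.Iio (1:ℝ)) (fun t => t^2) t)
          = fun t : ℝ => Set.indicator (Set.Iio (1:ℝ)) (fun t => t^(d+1)) t := by
        funext t
        by_cases h : t ∈ Set.Iio (1:ℝ)
        · rw [Set.indicator_of_mem h, Set.indicator_of_mem h, smul_eq_mul, ← pow_add]
          congr 1; omega
        · rw [Set.indicator_of_notMem h, Set.indicator_of_notMem h, smul_zero]
      rw [hptw, setIntegral_indicator measurableSet_Iio, Set.Ioi_inter_Iio,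
        ← MeasureTheory.integral_Ioc_eq_integral_Ioo,
        ← intervalIntegral.integral_of_le zero_le_one, integral_pow]
      push_cast
      ring
    rw [hJ, nsmul_eq_mul, smul_eq_mul]
    simp only [measureReal_def, hV]
    ring
  rw [integral_smul_measure]
  rw [integral_div]
  rw [hι, ENNReal.toReal_inv, smul_eq_mul]
  field_simp

lemma aux_part2 (d : ℕ) (hd : 1 ≤ d) {ε : ℝ} (hε : 0 < ε) :
    ENNReal.ofReal (1 - Real.exp (-(1/8 * d * ε))) ≤
      ((volume (ball (0 : EuclideanSpace ℝ (Fin d)) 1))⁻¹ •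
          volume.restrict (ball (0 : EuclideanSpace ℝ (Fin d)) 1))
        {x | |‖x‖ ^ 2 / d - 1/((d:ℝ)+2)| ≤ ε} := by
  set E := EuclideanSpace ℝ (Fin d)
  haveI : Nontrivial E := by
    apply Module.nontrivial_of_finrank_pos (R := ℝ)
    rw [finrank_euclideanSpace_fin]; omega
  set V : ℝ≥0∞ := volume (ball (0 : E) 1) with hV
  have hV0 : V ≠ 0 := (measure_ball_pos _ _ one_pos).ne'
  have hVtop : V ≠ ⊤ := measure_ball_lt_top.ne
  set νd : Measure E := V⁻¹ • volume.restrict (ball (0 : E) 1) with hνd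
  have hball : ∀ ρ : ℝ, 0 ≤ ρ → ρ ≤ 1 → νd (ball (0:E) ρ) = ENNReal.ofReal (ρ ^ d) := by
    intro ρ h0 h1
    rw [hνd, Measure.smul_apply, Measure.restrict_apply measurableSet_ball,
      Set.inter_eq_left.2 (ball_subset_ball h1),
      Measure.addHaar_ball volume (0:E) h0, finrank_euclideanSpace_fin, ← hV,
      smul_eq_mul, ← mul_assoc, mul_comm V⁻¹, mul_assoc,
      ENNReal.inv_mul_cancel hV0 hVtop, mul_one]
  have hd0 : (0:ℝ) < d := by exact_mod_cast hd
  set u : ℝ := (d:ℝ)/(d+2) with hu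
  have hu0 : 0 < u := by positivity
  have hu1 : u < 1 := by rw [hu, div_lt_one (by positivity)]; linarith
  set δ : ℝ := (d:ℝ) * ε with hδdef
  have hδ : 0 < δ := by positivity
  set R : ℝ := Real.sqrt (min 1 (u + δ)) with hR
  set r : ℝ := Real.sqrt (max 0 (u - δ)) with hr
  have hminnn : (0:ℝ) ≤ min 1 (u + δ) := le_min zero_le_one (by positivity)
  have hR1 : R ≤ 1 := by
    rw [hR]
    calc Real.sqrt (min 1 (u + δ)) ≤ Real.sqrt 1 := Real.sqrt_le_sqrt (min_le_left _ _)
      _ = 1 := Real.sqrt_one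
  have hrR : r ≤ R := by
    apply Real.sqrt_le_sqrt
    rcases le_total 1 (u + δ) with h | h
    · rw [min_eq_left h]; rw [max_le_iff]; constructor <;> linarith
    · rw [min_eq_right h]; rw [max_le_iff]; constructor <;> linarith
  have hr0 : 0 ≤ r := Real.sqrt_nonneg _
  -- inclusion
  have hsub : ball (0:E) R \ ball (0:E) r ⊆ {x : E | |‖x‖ ^ 2 / d - 1/((d:ℝ)+2)| ≤ ε} := by
    rintro x ⟨hx1, hx2⟩
    have hxR : ‖x‖ < R := mem_ball_zero_iff.1 hx1
    have hxr : r ≤ ‖x‖ := by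
      by_contra hc
      exact hx2 (mem_ball_zero_iff.2 (by linarith))
    have hup : ‖x‖^2 ≤ u + δ := by
      have : ‖x‖^2 ≤ R^2 := by
        apply pow_le_pow_left₀ (norm_nonneg x) hxR.le
      rw [hR, Real.sq_sqrt hminnn] at this
      exact this.trans (min_le_right _ _)
    have hlo : u - δ ≤ ‖x‖^2 := by
      have h1 : r^2 ≤ ‖x‖^2 := pow_le_pow_left₀ hr0 hxr 2
      rw [hr, Real.sq_sqrt (le_max_left _ _)] at h1
      exact le_trans (le_max_right _ _) h1
    have hud2 : u/(d:ℝ) = 1/((d:ℝ)+2) := by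
      rw [hu, div_div, mul_comm, ← div_div, div_self hd0.ne']
    have hxd : ‖x‖^2/(d:ℝ) - 1/((d:ℝ)+2) = (‖x‖^2 - u)/(d:ℝ) := by
      rw [sub_div, hud2]
    rw [Set.mem_setOf_eq, hxd, abs_div, abs_of_pos hd0, div_le_iff₀ hd0]
    rw [abs_le]
    constructor <;> nlinarith
  calc ENNReal.ofReal (1 - Real.exp (-(1/8 * d * ε)))
      ≤ ENNReal.ofReal (R ^ d - r ^ d) := by
        apply ENNReal.ofReal_le_ofReal
        have harg : -(1/8 * (d:ℝ) * ε) = -(δ/8) := by rw [hδdef]; ring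
        rw [harg]
        exact aux_conc d hd hδ
    _ = ENNReal.ofReal (R ^ d) - ENNReal.ofReal (r ^ d) :=
        ENNReal.ofReal_sub _ (by positivity)
    _ = νd (ball (0:E) R) - νd (ball (0:E) r) := by
        rw [hball R (Real.sqrt_nonneg _) hR1, hball r hr0 (hrR.trans hR1)]
    _ = νd (ball (0:E) R \ ball (0:E) r) := by
        rw [measure_diff (ball_subset_ball hrR) measurableSet_ball.nullMeasurableSet]
        rw [hball r hr0 (hrR.trans hR1)]
        exact ENNReal.ofReal_ne_top
    _ ≤ νd {x : E | |‖x‖ ^ 2 / d - 1/((d:ℝ)+2)| ≤ ε} := measure_mono hsub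

lemma aux_part1 (d : ℕ) (hd : 1 ≤ d) (w : EuclideanSpace ℝ (Fin d)) (hw : ‖w‖ = 1)
    (s : Set ℝ) (hs : MeasurableSet s) :
    Measure.map (fun x => ⟪w, x⟫)
        ((volume (ball (0 : EuclideanSpace ℝ (Fin d)) 1))⁻¹ •
          volume.restrict (ball (0 : EuclideanSpace ℝ (Fin d)) 1)) s
      ≤ ENNReal.ofReal ((d : ℝ) / (3/4)) * volume s := by
  obtain ⟨n, rfl⟩ : ∃ n, d = n + 1 := ⟨d - 1, by omega⟩
  have hn0 : ((n:ℝ)) ≥ 0 := Nat.cast_nonneg n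
  have hd0 : (0:ℝ) < ((n+1 : ℕ) : ℝ) := by positivity
  have hd1 : (1:ℝ) ≤ ((n+1 : ℕ) : ℝ) := by push_cast; linarith
  set V : ℝ≥0∞ := volume (ball (0 : EuclideanSpace ℝ (Fin (n+1))) 1) with hV
  -- orthonormal basis with b 0 = w
  have horth : Orthonormal ℝ (Set.restrict {(0 : Fin (n+1))} (fun _ => w)) := by
    constructor
    · intro i; exact hw
    · intro i j hij
      exact absurd (Subsingleton.elim i j) hij
  obtain ⟨b, hb⟩ := horth.exists_orthonormalBasis_extension_of_card_eq
    (by rw [finrank_euclideanSpace_fin, Fintype.card_fin])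
  have hb0 : b 0 = w := hb 0 rfl
  -- the full map to the pi space
  set ψ := (MeasurableEquiv.toLp 2 (Fin (n+1) → ℝ)).symm with hψ
  set Φ : EuclideanSpace ℝ (Fin (n+1)) → (Fin (n+1) → ℝ) := fun x => ψ (b.repr x) with hΦ
  have hΦmp : MeasurePreserving Φ volume volume :=
    (EuclideanSpace.volume_preserving_symm_measurableEquiv_toLp (Fin (n+1))).comp
      b.measurePreserving_repr
  have hΦapp : ∀ (x : EuclideanSpace ℝ (Fin (n+1))) (i : Fin (n+1)), Φ x i = b.repr x i := by
    intro x i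
    rw [hΦ]
    rfl
  have hΦsum : ∀ x : EuclideanSpace ℝ (Fin (n+1)), ∑ i, (Φ x i)^2 = ‖x‖^2 := by
    intro x
    have h1 : ‖x‖ = ‖b.repr x‖ := (b.repr.norm_map x).symm
    rw [h1, EuclideanSpace.norm_eq, Real.sq_sqrt (by positivity)]
    refine Finset.sum_congr rfl fun i _ => ?_
    rw [hΦapp, Real.norm_eq_abs, sq_abs]
  have hΦ0 : ∀ x : EuclideanSpace ℝ (Fin (n+1)), Φ x 0 = ⟪w, x⟫ := by
    intro x
    rw [hΦapp, OrthonormalBasis.repr_apply_apply, hb0]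
  have hf : Measurable (fun x : EuclideanSpace ℝ (Fin (n+1)) => ⟪w, x⟫) :=
    (continuous_const.inner continuous_id).measurable
  -- the sets
  set SA : Set (Fin (n+1) → ℝ) := {y | y 0 ∈ s ∧ ∑ i, y i ^ 2 < 1} with hSA
  set SB : Set (Fin (n+1) → ℝ) := {y | ∑ i, y i ^ 2 < 1} with hSB
  have hsum_meas : Measurable fun y : Fin (n+1) → ℝ => ∑ i, y i ^ 2 :=
    Finset.measurable_sum Finset.univ (fun i _ => (measurable_pi_apply i).pow_const 2)
  have hSA_meas : MeasurableSet SA :=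
    ((measurable_pi_apply 0) hs).inter (measurableSet_lt hsum_meas measurable_const)
  have hSB_meas : MeasurableSet SB := measurableSet_lt hsum_meas measurable_const
  -- sum splitting
  have hsplit : ∀ y : Fin (n+1) → ℝ,
      ∑ i, y i ^ 2 = y 0 ^ 2 + ∑ j : Fin n, y ((0 : Fin (n+1)).succAbove j) ^ 2 :=
    fun y => Fin.sum_univ_succAbove (fun i => y i ^ 2) 0
  -- the slice space
  set U₂ : Set (Fin n → ℝ) := {z | ∑ j, z j ^ 2 < 1} with hU₂
  set W : ℝ≥0∞ := volume U₂ with hW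
  have hsum2_meas : Measurable fun z : Fin n → ℝ => ∑ j, z j ^ 2 :=
    Finset.measurable_sum Finset.univ (fun i _ => (measurable_pi_apply i).pow_const 2)
  have hU₂_meas : MeasurableSet U₂ := measurableSet_lt hsum2_meas measurable_const
  have hW0 : W ≠ 0 := by
    refine (IsOpen.measure_pos volume ?_ ⟨0, ?_⟩).ne'
    · exact isOpen_lt (continuous_finset_sum _ fun i _ => (continuous_apply i).pow 2)
        continuous_const
    · simp [hU₂]
  have hWtop : W ≠ ⊤ := by
    refine (lt_of_le_of_lt (measure_mono ?_) (measure_closedBall_lt_top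
      (x := (0 : Fin n → ℝ)) (r := 1))).ne
    intro z hz
    rw [mem_closedBall_zero_iff]
    refine (pi_norm_le_iff_of_nonneg zero_le_one).2 fun j => ?_
    rw [Real.norm_eq_abs]
    refine aux_sq_le zero_le_one ?_ (abs_nonneg _)
    rw [sq_abs, one_pow]
    exact le_trans (Finset.single_le_sum (f := fun j => z j ^ 2)
      (fun i _ => sq_nonneg _) (Finset.mem_univ j)) hz.le
  -- the product decomposition
  set φ := MeasurableEquiv.piFinSuccAbove (fun _ : Fin (n+1) => ℝ) 0 with hφ
  have hφmp : MeasurePreserving φ volume volume :=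
    volume_preserving_piFinSuccAbove (fun _ : Fin (n+1) => ℝ) 0
  have hφapp1 : ∀ y : Fin (n+1) → ℝ, (φ y).1 = y 0 := fun _ => rfl
  have hφapp2 : ∀ (y : Fin (n+1) → ℝ) (j : Fin n), (φ y).2 j = y ((0 : Fin (n+1)).succAbove j) :=
    fun _ _ => rfl
  -- upper bound : volume SA ≤ volume s * W
  have hupper : volume SA ≤ volume s * W := by
    have hsub : SA ⊆ φ ⁻¹' (s ×ˢ U₂) := by
      rintro y ⟨h1, h2⟩
      refine ⟨by rwa [hφapp1], ?_⟩
      show (φ y).2 ∈ U₂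
      rw [hU₂, Set.mem_setOf_eq]
      have hs1 := hsplit y
      have h3 : ∑ j : Fin n, y ((0 : Fin (n+1)).succAbove j) ^ 2 < 1 := by
        nlinarith [sq_nonneg (y 0)]
      simpa only [hφapp2] using h3
    calc volume SA ≤ volume (φ ⁻¹' (s ×ˢ U₂)) := measure_mono hsub
      _ = volume (s ×ˢ U₂) := hφmp.measure_preimage ((hs.prod hU₂_meas).nullMeasurableSet)
      _ = volume s * W := by rw [Measure.volume_eq_prod, Measure.prod_prod]
  -- lower bound for V
  set a : ℝ := 1/(2*((n+1 : ℕ) : ℝ)) with ha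
  have ha0 : 0 < a := by positivity
  have ha1 : a ≤ 1/2 := by
    rw [ha, div_le_div_iff₀ (by positivity) (by norm_num)]
    push_cast
    linarith
  have ha2 : a^2 < 1 := by nlinarith
  set c : ℝ := Real.sqrt (1 - a^2) with hc
  have hc0 : 0 < c := Real.sqrt_pos.2 (by linarith)
  have hc1 : c ≤ 1 := by
    rw [hc]
    exact Real.sqrt_le_one.2 (by nlinarith)
  have hcsq : c^2 = 1 - a^2 := Real.sq_sqrt (by linarith)
  have hc34 : (3:ℝ)/4 ≤ c^n := by
    have h1 : c^(2*(n+1)) ≤ c^n := pow_le_pow_of_le_one hc0.le hc1 (by omega)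
    have h2 : c^(2*(n+1)) = (c^2)^(n+1) := by rw [pow_mul]
    have h3 : (1:ℝ) + ((n+1 : ℕ) : ℝ) * (-(a^2)) ≤ (1 + (-(a^2)))^(n+1) :=
      one_add_mul_le_pow (by nlinarith) (n+1)
    have h4 : ((n+1 : ℕ) : ℝ) * a^2 ≤ 1/4 := by
      have hne : ((n+1 : ℕ) : ℝ) ≠ 0 := hd0.ne'
      have e1 : ((n+1 : ℕ) : ℝ) * (1/(2*((n+1 : ℕ) : ℝ)))^2 = 1/(4*((n+1 : ℕ) : ℝ)) := by
        field_simp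
        ring
      rw [ha, e1, div_le_div_iff₀ (by positivity) (by norm_num)]
      push_cast
      linarith
    have h5 : (1:ℝ) + (-(a^2)) = 1 - a^2 := by ring
    rw [h5, ← hcsq] at h3
    rw [h2] at h1
    linarith
  -- ball = Φ ⁻¹' SB
  have hball : ball (0 : EuclideanSpace ℝ (Fin (n+1))) 1 = Φ ⁻¹' SB := by
    ext x
    rw [mem_ball_zero_iff, Set.mem_preimage, hSB, Set.mem_setOf_eq, hΦsum,
      pow_lt_one_iff_of_nonneg (norm_nonneg x) two_ne_zero]
  have hVSB : V = volume SB := by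
    rw [hV, hball, hΦmp.measure_preimage hSB_meas.nullMeasurableSet]
  -- lower bound pieces
  set U₂' : Set (Fin n → ℝ) := {z | ∑ j, z j ^ 2 < 1 - a^2} with hU₂'
  have hU₂'meas : MeasurableSet U₂' := measurableSet_lt hsum2_meas measurable_const
  have hU₂'eq : U₂' = c • U₂ := by
    ext z
    rw [Set.mem_smul_set_iff_inv_smul_mem₀ hc0.ne', hU₂', hU₂, Set.mem_setOf_eq,
      Set.mem_setOf_eq]
    have hz : ∀ j : Fin n, (c⁻¹ • z) j ^ 2 = c⁻¹^2 * z j ^2 := by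
      intro j; rw [Pi.smul_apply, smul_eq_mul, mul_pow]
    rw [Finset.sum_congr rfl fun j _ => hz j, ← Finset.mul_sum, inv_pow,
      ← div_eq_inv_mul, div_lt_one (pow_pos hc0 2), hcsq]
  have hU₂'vol : volume U₂' = ENNReal.ofReal (c^n) * W := by
    rw [hU₂'eq, hW, Measure.addHaar_smul, Module.finrank_fintype_fun_eq_card,
      Fintype.card_fin, abs_of_nonneg (by positivity)]
  have hlow : ENNReal.ofReal (2*a) * (ENNReal.ofReal (c^n) * W) ≤ V := by
    have hsub' : φ ⁻¹' ((ball (0:ℝ) a) ×ˢ U₂') ⊆ SB := by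
      rintro y ⟨h1, h2⟩
      have hy0 : |y 0| < a := by
        rw [hφapp1, mem_ball_zero_iff, Real.norm_eq_abs] at h1
        exact h1
      have hy2 : ∑ j : Fin n, y ((0 : Fin (n+1)).succAbove j) ^ 2 < 1 - a^2 := by
        rw [hU₂', Set.mem_setOf_eq] at h2
        simpa only [hφapp2] using h2
      rw [hSB, Set.mem_setOf_eq, hsplit y]
      have hsq : y 0 ^ 2 < a ^ 2 := by
        rw [← sq_abs]
        exact pow_lt_pow_left₀ hy0 (abs_nonneg _) two_ne_zero
      linarith
    calc ENNReal.ofReal (2*a) * (ENNReal.ofReal (c^n) * W)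
        = volume (ball (0:ℝ) a) * volume U₂' := by rw [hU₂'vol, Real.volume_ball]
      _ = volume ((ball (0:ℝ) a) ×ˢ U₂') := by rw [Measure.volume_eq_prod, Measure.prod_prod]
      _ = volume (φ ⁻¹' ((ball (0:ℝ) a) ×ˢ U₂')) :=
          (hφmp.measure_preimage ((measurableSet_ball.prod hU₂'meas).nullMeasurableSet)).symm
      _ ≤ volume SB := measure_mono hsub'
      _ = V := hVSB.symm
  -- put everything together
  set K : ℝ≥0∞ := ENNReal.ofReal (3/(4*((n+1 : ℕ) : ℝ))) with hK
  have hK0 : K ≠ 0 := by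
    rw [hK]
    exact (ENNReal.ofReal_pos.2 (by positivity)).ne'
  have hKtop : K ≠ ⊤ := ENNReal.ofReal_ne_top
  have hKW : K * W ≤ V := by
    have e1 : (3:ℝ)/(4*((n+1 : ℕ) : ℝ)) = (2*a) * (3/4) := by
      rw [ha]; field_simp
    have e2 : K = ENNReal.ofReal (2*a) * ENNReal.ofReal (3/4) := by
      rw [hK, e1, ENNReal.ofReal_mul (by positivity)]
    calc K * W = ENNReal.ofReal (2*a) * (ENNReal.ofReal (3/4) * W) := by
          rw [e2, mul_assoc]
      _ ≤ ENNReal.ofReal (2*a) * (ENNReal.ofReal (c^n) * W) :=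
          mul_le_mul' le_rfl (mul_le_mul' (ENNReal.ofReal_le_ofReal hc34) le_rfl)
      _ ≤ V := hlow
  have hKinv : K⁻¹ = ENNReal.ofReal (((n+1 : ℕ) : ℝ)/(3/4)) := by
    rw [hK, ← ENNReal.ofReal_inv_of_pos (by positivity)]
    congr 1
    rw [inv_div]
    ring
  -- final computation
  rw [Measure.map_apply hf hs, Measure.smul_apply, Measure.restrict_apply (hf hs),
    smul_eq_mul]
  have hpre : (fun x : EuclideanSpace ℝ (Fin (n+1)) => ⟪w, x⟫) ⁻¹' s ∩
      ball (0 : EuclideanSpace ℝ (Fin (n+1))) 1 = Φ ⁻¹' SA := by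
    rw [hball]
    ext x
    rw [Set.mem_inter_iff, Set.mem_preimage, Set.mem_preimage, Set.mem_preimage, hSA,
      hSB, Set.mem_setOf_eq, Set.mem_setOf_eq, hΦ0]
  rw [hpre, hΦmp.measure_preimage hSA_meas.nullMeasurableSet]
  calc V⁻¹ * volume SA ≤ (K * W)⁻¹ * (volume s * W) :=
        mul_le_mul' (ENNReal.inv_le_inv' hKW) hupper
    _ = K⁻¹ * W⁻¹ * (volume s * W) := by
        rw [ENNReal.mul_inv (Or.inl hK0) (Or.inl hKtop)]
    _ = K⁻¹ * volume s * (W⁻¹ * W) := by ring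
    _ = K⁻¹ * volume s := by
        rw [ENNReal.inv_mul_cancel hW0 hWtop, mul_one]
    _ = ENNReal.ofReal (((n+1 : ℕ) : ℝ)/(3/4)) * volume s := by rw [hKinv]

/-- Counter-example separating directional and polynomial smoothness: the uniform
distribution `ν_d` on the Euclidean unit ball in `ℝᵈ` is (i) `σ_dir`-directionally
smooth with `σ_dir = c/d = Ω(1/d)` (every unit-direction projection has density at
most `d/c`), while (ii) the degree-2 polynomial `f(x) = ‖x‖²/d` concentrates:
`ν_d(|f(x) − E f| ≤ ε) ≥ 1 − e^{−C·d·ε}`, so `ν_d` can only be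
`σ_poly^{(2)}`-polynomially smooth with `σ_poly^{(2)}` exponentially small in `d`. -/
theorem uniform_ball_directionally_smooth_not_polynomially_smooth :
    ∃ c C : ℝ, 0 < c ∧ 0 < C ∧
      ∀ d : ℕ, 1 ≤ d →
        ∀ νd : Measure (EuclideanSpace ℝ (Fin d)),
          νd = (volume (ball (0 : EuclideanSpace ℝ (Fin d)) 1))⁻¹ •
              volume.restrict (ball (0 : EuclideanSpace ℝ (Fin d)) 1) →
          -- (i) directional smoothness with σ_dir = c/d
          ((∀ w : EuclideanSpace ℝ (Fin d), ‖w‖ = 1 →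
            ∀ s : Set ℝ, MeasurableSet s →
              Measure.map (fun x => ⟪w, x⟫) νd s ≤ ENNReal.ofReal (d / c) * volume s) ∧
          -- (ii) concentration of ‖x‖²/d, ruling out polynomial smoothness
          (∀ ε : ℝ, 0 < ε →
            ENNReal.ofReal (1 - Real.exp (-(C * d * ε))) ≤
              νd {x | |‖x‖ ^ 2 / d - ∫ y, ‖y‖ ^ 2 / d ∂νd| ≤ ε})) := by
  refine ⟨3/4, 1/8, by norm_num, by norm_num, ?_⟩
  intro d hd νd hν
  subst hν
  constructor
  · intro w hw s hs
    exact aux_part1 d hd w hw s hs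
  · intro ε hε
    rw [aux_mean d hd]
    exact aux_part2 d hd hε
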